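/- Let U ⊆ X be open convex and f ∈ C^{1u}(U,Y). If f′ takes U-bounded weakly p-precompact subsets of U into uniformly p-convergent subsets of L(X,Y), then f is weakly p-sequentially continuous: f maps U-bounded weakly p-Cauchy sequences of U into norm convergent sequences in Y. -/

import Mathlib

open Filter Topology Metric Set
open scoped ENNReal NNReal

section Defs

variable {X Y : Type*} [NormedAddCommGroup X] [NormedSpace ℝ X]
  [NormedAddCommGroup Y] [NormedSpace ℝ Y]

/-- A sequence `(x n)` in `X` is weakly `p`-summable if `(f (x n))ₙ ∈ ℓ_p` for every
continuous linear functional `f` (for `p = ∞`, this means `(f (x n))ₙ ∈ c₀`). -/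
def WeaklyLpSummable (p : ℝ≥0∞) (x : ℕ → X) : Prop :=
  ∀ f : X →L[ℝ] ℝ,
    if p = ⊤ then Filter.Tendsto (fun n => f (x n)) Filter.atTop (nhds 0)
    else Memℓp (fun n => f (x n)) p

/-- A sequence is weakly `p`-Cauchy if all difference sequences along pairs of strictly
monotone index sequences are weakly `p`-summable. -/
def WeaklyLpCauchy (p : ℝ≥0∞) (x : ℕ → X) : Prop :=
  ∀ m k : ℕ → ℕ, StrictMono m → StrictMono k →
    WeaklyLpSummable p (fun i => x (m i) - x (k i))

/-- `(x n)` is weakly `p`-convergent to `x₀` if `(x n - x₀)` is weakly `p`-summable. -/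
def WeaklyLpConvergentTo (p : ℝ≥0∞) (x : ℕ → X) (x₀ : X) : Prop :=
  WeaklyLpSummable p (fun n => x n - x₀)

/-- A set `K ⊆ L(X,Y)` is uniformly `p`-convergent if `lim_n sup_{T ∈ K} ‖T (x n)‖ = 0`
for every weakly `p`-summable sequence `(x n)`. -/
def UniformlyPConvergent (p : ℝ≥0∞) (K : Set (X →L[ℝ] Y)) : Prop :=
  ∀ x : ℕ → X, WeaklyLpSummable p x →
    ∀ ε > 0, ∃ N : ℕ, ∀ n ≥ N, ∀ T ∈ K, ‖T (x n)‖ < ε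

/-- `B` is `U`-bounded: contained in `U`, bounded, and at positive distance from `∂U`. -/
def UBounded (U B : Set X) : Prop :=
  B ⊆ U ∧ Bornology.IsBounded B ∧ ∃ r > 0, ∀ b ∈ B, Metric.ball b r ⊆ U

/-- A sequence is `U`-bounded if its range is a `U`-bounded set. -/
def UBoundedSeq (U : Set X) (x : ℕ → X) : Prop :=
  UBounded U (Set.range x)

/-- `f ∈ C^{1u}(U,Y)`: `f` is differentiable on `U` with derivative `f'` which is
uniformly continuous on `U`-bounded subsets of `U`. -/
def C1u (U : Set X) (f : X → Y) (f' : X → X →L[ℝ] Y) : Prop :=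
  (∀ x ∈ U, HasFDerivAt f (f' x) x) ∧
  ∀ B : Set X, UBounded U B → UniformContinuousOn f' B

/-- `T` is a `p`-convergent operator: it maps weakly `p`-summable sequences to norm-null
sequences. -/
def PConvergentOp (p : ℝ≥0∞) (T : X →L[ℝ] Y) : Prop :=
  ∀ x : ℕ → X, WeaklyLpSummable p x →
    Filter.Tendsto (fun n => ‖T (x n)‖) Filter.atTop (nhds 0)

/-- `f` is weakly `p`-sequentially continuous on `U`: it maps `U`-bounded weakly
`p`-Cauchy sequences to norm convergent sequences. -/
def WeaklyPSeqCont (p : ℝ≥0∞) (U : Set X) (f : X → Y) : Prop :=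
  ∀ x : ℕ → X, UBoundedSeq U x → WeaklyLpCauchy p x →
    ∃ l : Y, Filter.Tendsto (fun n => f (x n)) Filter.atTop (nhds l)

/-- `K` is weakly `p`-precompact: every sequence in `K` has a weakly `p`-Cauchy
subsequence. -/
def WeaklyPPrecompact (p : ℝ≥0∞) (K : Set X) : Prop :=
  ∀ x : ℕ → X, (∀ n, x n ∈ K) →
    ∃ m : ℕ → ℕ, StrictMono m ∧ WeaklyLpCauchy p (fun i => x (m i))

end Defs

section MyAux

variable {X : Type*} [NormedAddCommGroup X] [NormedSpace ℝ X]

lemma myWLS_zero (p : ℝ≥0∞) : WeaklyLpSummable p (fun _ : ℕ => (0 : X)) := by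
  intro f
  split
  · simpa using (tendsto_const_nhds : Tendsto (fun _ : ℕ => (0:ℝ)) atTop (nhds 0))
  · simpa [map_zero] using (zero_mem_ℓp' : Memℓp (fun _ : ℕ => (0:ℝ)) _)

lemma myWLS_add {p : ℝ≥0∞} {x y : ℕ → X} (hx : WeaklyLpSummable p x)
    (hy : WeaklyLpSummable p y) : WeaklyLpSummable p (fun n => x n + y n) := by
  intro f
  have hx := hx f; have hy := hy f
  by_cases hptop : p = ⊤
  · rw [if_pos hptop] at *
    simpa [map_add] using hx.add hy
  · rw [if_neg hptop] at *
    have := hx.add hy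
    have heq : (fun n => f (x n + y n)) =
        (fun n => f (x n)) + (fun n => f (y n)) := by
      funext n; simp [map_add]
    rw [heq]; exact this

lemma myWLS_smul {p : ℝ≥0∞} (hp : 1 ≤ p) {x : ℕ → X} (t : ℕ → ℝ) (ht : ∀ n, |t n| ≤ 1)
    (hx : WeaklyLpSummable p x) : WeaklyLpSummable p (fun n => t n • x n) := by
  intro f
  have hx := hx f
  have hb : ∀ n, ‖f (t n • x n)‖ ≤ ‖f (x n)‖ := by
    intro n
    rw [map_smul, smul_eq_mul]
    calc ‖t n * f (x n)‖ = |t n| * ‖f (x n)‖ := by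
          rw [norm_mul]; rfl
      _ ≤ 1 * ‖f (x n)‖ := by
          exact mul_le_mul_of_nonneg_right (ht n) (norm_nonneg _)
      _ = ‖f (x n)‖ := one_mul _
  by_cases hptop : p = ⊤
  · rw [if_pos hptop] at *
    exact squeeze_zero_norm hb (tendsto_zero_iff_norm_tendsto_zero.mp hx)
  · rw [if_neg hptop] at *
    have hp0 : 0 < p.toReal :=
      ENNReal.toReal_pos (lt_of_lt_of_le zero_lt_one hp).ne' hptop
    rw [memℓp_gen_iff hp0] at *
    refine Summable.of_nonneg_of_le (fun n => Real.rpow_nonneg (norm_nonneg _) _)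
      (fun n => Real.rpow_le_rpow (norm_nonneg _) (hb n) hp0.le) hx

lemma myWLS_comp {p : ℝ≥0∞} (hp : 1 ≤ p) {x : ℕ → X} (hx : WeaklyLpSummable p x)
    {ψ : ℕ → ℕ} (hψ : StrictMono ψ) : WeaklyLpSummable p (fun n => x (ψ n)) := by
  intro f
  have hx := hx f
  by_cases hptop : p = ⊤
  · rw [if_pos hptop] at *
    exact hx.comp hψ.tendsto_atTop
  · rw [if_neg hptop] at *
    have hp0 : 0 < p.toReal :=
      ENNReal.toReal_pos (lt_of_lt_of_le zero_lt_one hp).ne' hptop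
    rw [memℓp_gen_iff hp0] at *
    exact hx.comp_injective hψ.injective

lemma myWLC_comp {p : ℝ≥0∞} {x : ℕ → X} (hx : WeaklyLpCauchy p x)
    {ψ : ℕ → ℕ} (hψ : StrictMono ψ) : WeaklyLpCauchy p (fun n => x (ψ n)) := by
  intro m k hm hk
  exact hx (ψ ∘ m) (ψ ∘ k) (hψ.comp hm) (hψ.comp hk)


/-- The "segment points" sequence built from a weakly p-Cauchy sequence is weakly p-Cauchy. -/
lemma myWLC_segment {p : ℝ≥0∞} (hp : 1 ≤ p) {x : ℕ → X} (hx : WeaklyLpCauchy p x)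
    {m k : ℕ → ℕ} (hm : StrictMono m) (hk : StrictMono k) {t : ℕ → ℝ}
    (ht : ∀ i, t i ∈ Set.Icc (0:ℝ) 1) :
    WeaklyLpCauchy p (fun i => x (k i) + t i • (x (m i) - x (k i))) := by
  intro m' k' hm' hk'
  set v : ℕ → X := fun i => x (m i) - x (k i) with hv
  have hvS : WeaklyLpSummable p v := hx m k hm hk
  have htb : ∀ i, |t i| ≤ 1 := fun i => abs_le.mpr ⟨by linarith [(ht i).1], (ht i).2⟩
  have A : WeaklyLpSummable p (fun i => x (k (m' i)) - x (k (k' i))) :=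
    hx (k ∘ m') (k ∘ k') (hk.comp hm') (hk.comp hk')
  have B1 : WeaklyLpSummable p (fun i => t (m' i) • v (m' i)) :=
    myWLS_smul hp (fun i => t (m' i)) (fun i => htb _) (myWLS_comp hp hvS hm')
  have B2 : WeaklyLpSummable p (fun i => (-(t (k' i))) • v (k' i)) :=
    myWLS_smul hp (fun i => -(t (k' i))) (fun i => by rw [abs_neg]; exact htb _)
      (myWLS_comp hp hvS hk')
  have := myWLS_add A (myWLS_add B1 B2)
  have heq : (fun i => (x (k (m' i)) + t (m' i) • v (m' i)) -
      (x (k (k' i)) + t (k' i) • v (k' i))) =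
      fun i => (x (k (m' i)) - x (k (k' i))) +
        (t (m' i) • v (m' i) + (-(t (k' i))) • v (k' i)) := by
    funext i
    rw [neg_smul]
    abel
  rw [show (fun i => (fun j => x (k j) + t j • (x (m j) - x (k j))) (m' i) -
      (fun j => x (k j) + t j • (x (m j) - x (k j))) (k' i)) =
      (fun i => (x (k (m' i)) + t (m' i) • v (m' i)) -
      (x (k (k' i)) + t (k' i) • v (k' i))) from rfl, heq]
  exact this

/-- The range of a weakly p-Cauchy sequence is weakly p-precompact. -/
lemma myPrecompact_of_cauchy {p : ℝ≥0∞} {c : ℕ → X} (hc : WeaklyLpCauchy p c) :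
    WeaklyPPrecompact p (Set.range c) := by
  intro y hy
  choose φ hφ using fun n => hy n
  by_cases hfin : ∀ v, ({n | φ n = v} : Set ℕ).Finite
  · have htend : Tendsto φ atTop atTop := by
      rw [Filter.tendsto_atTop]
      intro b
      rw [← Nat.cofinite_eq_atTop, eventually_cofinite]
      have : {n | ¬ b ≤ φ n} ⊆ ⋃ v ∈ Finset.range b, {n | φ n = v} := by
        intro n hn
        simp only [Set.mem_setOf_eq, not_le] at hn
        simp only [Set.mem_iUnion, Finset.mem_range]
        exact ⟨φ n, hn, rfl⟩
      exact Set.Finite.subset (Set.Finite.biUnion (Finset.range b).finite_toSet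
        (fun v _ => hfin v)) this
    obtain ⟨σ, hσ, hσφ⟩ := strictMono_subseq_of_tendsto_atTop htend
    refine ⟨σ, hσ, ?_⟩
    have heq : (fun i => y (σ i)) = fun i => c ((φ ∘ σ) i) := by
      funext i; exact (hφ (σ i)).symm
    rw [heq]
    exact myWLC_comp hc hσφ
  · push_neg at hfin
    obtain ⟨v, hv⟩ := hfin
    have : ∃ᶠ n in atTop, φ n = v := Nat.frequently_atTop_iff_infinite.mpr hv
    obtain ⟨σ, hσ, hσv⟩ := extraction_of_frequently_atTop this
    refine ⟨σ, hσ, ?_⟩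
    intro m' k' hm' hk'
    have heq : (fun i => (fun j => y (σ j)) (m' i) - (fun j => y (σ j)) (k' i)) =
        fun _ : ℕ => (0 : X) := by
      funext i
      have h1 : y (σ (m' i)) = c v := by rw [← hσv (m' i)]; exact (hφ _).symm
      have h2 : y (σ (k' i)) = c v := by rw [← hσv (k' i)]; exact (hφ _).symm
      show y (σ (m' i)) - y (σ (k' i)) = 0
      rw [h1, h2, sub_self]
    rw [heq]
    exact myWLS_zero p

/-- Mean value consequence: if the difference of values is large, the derivative is large
somewhere on the segment. -/
lemma myMVT {Y : Type*} [NormedAddCommGroup Y] [NormedSpace ℝ Y]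
    {U : Set X} (hUc : Convex ℝ U) {f : X → Y} {f' : X → X →L[ℝ] Y}
    (hf : ∀ x ∈ U, HasFDerivAt f (f' x) x) {a b : X} (ha : a ∈ U) (hb : b ∈ U)
    {ε : ℝ} (hε : 0 < ε) (h : ε ≤ ‖f a - f b‖) :
    ∃ t ∈ Set.Icc (0:ℝ) 1, ε / 2 < ‖(f' (b + t • (a - b))) (a - b)‖ := by
  by_contra hcon
  push_neg at hcon
  set γ : ℝ → X := fun t => b + t • (a - b) with hγ
  have hγmem : ∀ t ∈ Set.Icc (0:ℝ) 1, γ t ∈ U := by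
    intro t ht
    have : γ t = (1 - t) • b + t • a := by
      simp only [hγ]
      module
    rw [this]
    exact hUc hb ha (by linarith [ht.1, ht.2]) ht.1 (by ring)
  have hder : ∀ t ∈ Set.Icc (0:ℝ) 1,
      HasDerivWithinAt (fun s => f (γ s)) ((f' (γ t)) (a - b)) (Set.Icc 0 1) t := by
    intro t ht
    have hγd : HasDerivAt γ (a - b) t := by
      have h1 : HasDerivAt (fun s : ℝ => s • (a - b)) ((1:ℝ) • (a - b)) t :=
        (hasDerivAt_id t).smul_const (a - b)
      have h2 := h1.const_add b
      rw [one_smul] at h2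
      exact h2
    exact ((hf (γ t) (hγmem t ht)).comp_hasDerivAt t hγd).hasDerivWithinAt
  have hbound : ∀ t ∈ Set.Ico (0:ℝ) 1, ‖(f' (γ t)) (a - b)‖ ≤ ε / 2 := by
    intro t ht
    exact hcon t ⟨ht.1, ht.2.le⟩
  have := norm_image_sub_le_of_norm_deriv_le_segment' hder hbound 1 (by norm_num)
  have hg1 : γ 1 = a := by simp only [hγ]; module
  have hg0 : γ 0 = b := by simp only [hγ]; module
  rw [hg1, hg0] at this
  simp only [sub_zero, mul_one] at this
  linarith


end MyAux

/-- If `f'` maps `U`-bounded weakly `p`-precompact subsets of `U` into uniformly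
`p`-convergent subsets of `L(X,Y)`, then `f` is weakly `p`-sequentially continuous. -/
theorem deriv_uniformlyPConvergent_imp_weaklyPSeqCont
    {X Y : Type*} [NormedAddCommGroup X] [NormedSpace ℝ X] [CompleteSpace X]
    [NormedAddCommGroup Y] [NormedSpace ℝ Y] [CompleteSpace Y]
    (p : ℝ≥0∞) (hp : 1 ≤ p)
    (U : Set X) (hU : IsOpen U) (hUc : Convex ℝ U)
    (f : X → Y) (f' : X → X →L[ℝ] Y) (hf : C1u U f f')
    (H : ∀ K : Set X, UBounded U K → WeaklyPPrecompact p K →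
      UniformlyPConvergent p (f' '' K)) :
    WeaklyPSeqCont p U f := by
  intro x hxU hxC
  obtain ⟨hsub, hbdd, r, hr, hball⟩ := hxU
  have hxmem : ∀ n, x n ∈ U := fun n => hsub ⟨n, rfl⟩
  have hcs : CauchySeq (fun n => f (x n)) := by
    by_contra hnc
    rw [Metric.cauchySeq_iff] at hnc
    push_neg at hnc
    obtain ⟨ε, hε, hN⟩ := hnc
    choose u hu v hv hd using hN
    -- build strictly monotone index sequences
    set g : ℕ → ℕ := fun i => Nat.rec 0 (fun _ gi => max (u gi) (v gi) + 1) i with hg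
    have hgsucc : ∀ i, g (i + 1) = max (u (g i)) (v (g i)) + 1 := fun i => rfl
    set m : ℕ → ℕ := fun i => u (g i) with hmdef
    set k : ℕ → ℕ := fun i => v (g i) with hkdef
    have hm : StrictMono m := by
      apply strictMono_nat_of_lt_succ
      intro i
      calc m i = u (g i) := rfl
        _ < g (i + 1) := by rw [hgsucc]; omega
        _ ≤ u (g (i + 1)) := hu _
    have hk : StrictMono k := by
      apply strictMono_nat_of_lt_succ
      intro i
      calc k i = v (g i) := rfl
        _ < g (i + 1) := by rw [hgsucc]; omega
        _ ≤ v (g (i + 1)) := hv _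
    have hdist : ∀ i, ε ≤ ‖f (x (m i)) - f (x (k i))‖ := by
      intro i
      have := hd (g i)
      rwa [dist_eq_norm] at this
    -- pick segment points witnessing large derivative
    have hpick : ∀ i, ∃ t ∈ Set.Icc (0:ℝ) 1,
        ε / 2 < ‖(f' (x (k i) + t • (x (m i) - x (k i)))) (x (m i) - x (k i))‖ :=
      fun i => myMVT hUc hf.1 (hxmem (m i)) (hxmem (k i)) hε (hdist i)
    choose t ht hbig using hpick
    set c : ℕ → X := fun i => x (k i) + t i • (x (m i) - x (k i)) with hc
    have hcC : WeaklyLpCauchy p c := myWLC_segment hp hxC hm hk ht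
    -- K = range c is U-bounded
    have hKU : UBounded U (Set.range c) := by
      refine ⟨?_, ?_, r, hr, ?_⟩
      · rintro _ ⟨i, rfl⟩
        have : c i = (1 - t i) • x (k i) + t i • x (m i) := by
          simp only [hc]; module
        rw [this]
        exact hUc (hxmem (k i)) (hxmem (m i))
          (by linarith [(ht i).1, (ht i).2]) (ht i).1 (by ring)
      · obtain ⟨R, hR⟩ := isBounded_iff_forall_norm_le.mp hbdd
        refine isBounded_iff_forall_norm_le.mpr ⟨3 * R, ?_⟩
        rintro _ ⟨i, rfl⟩
        have h1 : ‖x (k i)‖ ≤ R := hR _ ⟨k i, rfl⟩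
        have h2 : ‖x (m i)‖ ≤ R := hR _ ⟨m i, rfl⟩
        have htle : |t i| ≤ 1 := abs_le.mpr ⟨by linarith [(ht i).1], (ht i).2⟩
        calc ‖c i‖ ≤ ‖x (k i)‖ + ‖t i • (x (m i) - x (k i))‖ := norm_add_le _ _
          _ = ‖x (k i)‖ + |t i| * ‖x (m i) - x (k i)‖ := by rw [norm_smul, Real.norm_eq_abs]
          _ ≤ R + 1 * (‖x (m i)‖ + ‖x (k i)‖) := by
              gcongr
              exact norm_sub_le _ _
          _ ≤ 3 * R := by linarith
      · rintro _ ⟨i, rfl⟩ z hz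
        rw [mem_ball, dist_eq_norm] at hz
        have hz1 : x (k i) + (z - c i) ∈ U := by
          apply hball (x (k i)) ⟨k i, rfl⟩
          rw [mem_ball, dist_eq_norm]
          simpa using hz
        have hz2 : x (m i) + (z - c i) ∈ U := by
          apply hball (x (m i)) ⟨m i, rfl⟩
          rw [mem_ball, dist_eq_norm]
          simpa using hz
        have : z = (1 - t i) • (x (k i) + (z - c i)) + t i • (x (m i) + (z - c i)) := by
          simp only [hc]; module
        rw [this]
        exact hUc hz1 hz2 (by linarith [(ht i).1, (ht i).2]) (ht i).1 (by ring)
    have hKP : WeaklyPPrecompact p (Set.range c) := myPrecompact_of_cauchy hcC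
    have hU := H (Set.range c) hKU hKP
    have hvS : WeaklyLpSummable p (fun i => x (m i) - x (k i)) := hxC m k hm hk
    obtain ⟨N, hNN⟩ := hU _ hvS (ε / 2) (by linarith)
    have := hNN N le_rfl (f' (c N)) ⟨c N, ⟨N, rfl⟩, rfl⟩
    exact absurd this (not_lt.mpr (hbig N).le)
  exact cauchySeq_tendsto_of_complete hcs
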